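/- arXiv:1708.02110 — 2 statements merged into one kernel-verified Lean document; each statement's English description precedes it below -/
import Mathlib

section
/- Let ${}^2G = (G \to N)$ be a crossed module with $i : G \to N$ injective (identify $G$ with $i(G) \trianglelefteq N$), and let $\Delta$ be a poset with inflationary simplicial set $\Sigma_*(\Delta)$. The map $\mu_2$ sending a non-abelian 2-cocycle $(u,g)$ (maps $u : \Sigma_1(\Delta) \to N$, $g : \Sigma_2(\Delta) \to G$ with $i(g_c) = u_{\partial_0 c} u_{\partial_2 c} u_{\partial_1 c}^{-1}$) to the 1-cocycle $b \mapsto u_b \bmod G$ with values in $N/G$ induces a bijection $\check H^2(\Delta, {}^2G) \to H^1(\Delta, N/G)$ on cohomology classes. -/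
/-- A 1-simplex of a poset `Δ` from `x` to `y` (`∂₁ = x`, `∂₀ = y`, `|b| = supp`). -/
structure Seg (Δ : Type*) [PartialOrder Δ] (x y : Δ) where
  supp : Δ
  hx : x ≤ supp
  hy : y ≤ supp

/-- A 2-simplex of a poset `Δ`: vertices `x, y, z`, faces `e₂ : x → y`, `e₀ : y → z`,
`e₁ : x → z` (the face-matching conditions are encoded in the typing), and a support
dominating the supports of the faces. -/
structure Tri (Δ : Type*) [PartialOrder Δ] where
  x : Δ
  y : Δ
  z : Δ
  e2 : Seg Δ x y
  e0 : Seg Δ y z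
  e1 : Seg Δ x z
  supp : Δ
  h0 : e0.supp ≤ supp
  h1 : e1.supp ≤ supp
  h2 : e2.supp ≤ supp

/-- A non-abelian 2-cocycle `(u, g)` on `Δ` with coefficients in the crossed module
`i : G →* N`: `i(g_c) = u_{∂₀c} · u_{∂₂c} · u_{∂₁c}⁻¹` for all 2-simplices `c`. -/
def IsZ2 {Δ : Type*} [PartialOrder Δ] {G N : Type*} [Group G] [Group N] (i : G →* N)
    (u : ∀ x y : Δ, Seg Δ x y → N) (g : Tri Δ → G) : Prop :=
  ∀ c : Tri Δ, i (g c) = u c.y c.z c.e0 * u c.x c.y c.e2 * (u c.x c.z c.e1)⁻¹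

/-- Two non-abelian 2-cocycles are cohomologous: there are `v : Σ₀ → N`, `h : Σ₁ → G` with
`u'_b = i(h_b) · v_{∂₀b} · u_b · v_{∂₁b}⁻¹` and
`g'_c = β_{u'_{∂₀c}}(h_{∂₂c}) · h_{∂₀c} · β_{v_{∂₀₁c}}(g_c) · h_{∂₁c}⁻¹`. -/
def Coh2 {Δ : Type*} [PartialOrder Δ] {G N : Type*} [Group G] [Group N]
    (i : G →* N) (β : N →* MulAut G)
    (u : ∀ x y : Δ, Seg Δ x y → N) (g : Tri Δ → G)
    (u' : ∀ x y : Δ, Seg Δ x y → N) (g' : Tri Δ → G) : Prop :=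
  ∃ (v : Δ → N) (h : ∀ x y : Δ, Seg Δ x y → G),
    (∀ (x y : Δ) (s : Seg Δ x y), u' x y s = i (h x y s) * v y * u x y s * (v x)⁻¹) ∧
    (∀ c : Tri Δ,
      g' c = β (u' c.y c.z c.e0) (h c.x c.y c.e2) * h c.y c.z c.e0 *
        β (v c.z) (g c) * (h c.x c.z c.e1)⁻¹)

/-- A 1-cocycle with values in `N/G`, given by a representative map `w : Σ₁ → N`:
the cocycle identity holds modulo `i(G)`. -/
def IsZ1ModG {Δ : Type*} [PartialOrder Δ] {G N : Type*} [Group G] [Group N] (i : G →* N)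
    (w : ∀ x y : Δ, Seg Δ x y → N) : Prop :=
  ∀ c : Tri Δ, ∃ g : G, w c.x c.z c.e1 = i g * (w c.y c.z c.e0 * w c.x c.y c.e2)

/-- Two `N/G`-valued 1-cocycles (given by representatives) are cohomologous:
`ζ_{∂₀b} · w_b · ζ_{∂₁b}⁻¹ = w'_b` modulo `i(G)` for some 0-cochain `ζ`. -/
def Coh1ModG {Δ : Type*} [PartialOrder Δ] {G N : Type*} [Group G] [Group N] (i : G →* N)
    (w w' : ∀ x y : Δ, Seg Δ x y → N) : Prop :=
  ∃ ζ : Δ → N, ∀ (x y : Δ) (s : Seg Δ x y),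
    ∃ g : G, w' x y s = i g * (ζ y * w x y s * (ζ x)⁻¹)

/-- For a crossed module `(G ⟶ N)` with `i` injective, the map `μ₂` sending a
non-abelian 2-cocycle `(u, g)` to the `N/G`-valued 1-cocycle `b ↦ u_b mod G` induces a
bijection `Ȟ²(Δ, ²G) → H¹(Δ, N/G)`: it is compatible with the cohomology relations in both
directions, and every class in `H¹(Δ, N/G)` is attained. -/
theorem mu2_induces_bijection_on_cohomology {Δ : Type*} [PartialOrder Δ]
    {G N : Type*} [Group G] [Group N] (i : G →* N) (β : N →* MulAut G)
    (hi : ∀ (u : N) (g : G), i (β u g) = u * i g * u⁻¹)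
    (hb : ∀ g h : G, β (i g) h = g * h * g⁻¹)
    (hinj : Function.Injective i) :
    -- μ₂ maps 2-cocycles to N/G-valued 1-cocycles
    (∀ (u : ∀ x y : Δ, Seg Δ x y → N) (g : Tri Δ → G),
        IsZ2 i u g → IsZ1ModG i u) ∧
    -- μ₂ is well defined and injective on cohomology classes
    (∀ (u : ∀ x y : Δ, Seg Δ x y → N) (g : Tri Δ → G)
       (u' : ∀ x y : Δ, Seg Δ x y → N) (g' : Tri Δ → G),
        IsZ2 i u g → IsZ2 i u' g' →
        (Coh2 i β u g u' g' ↔ Coh1ModG i u u')) ∧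
    -- μ₂ is surjective on cohomology classes
    (∀ w : ∀ x y : Δ, Seg Δ x y → N, IsZ1ModG i w →
        ∃ (u : ∀ x y : Δ, Seg Δ x y → N) (g : Tri Δ → G),
          IsZ2 i u g ∧ Coh1ModG i u w) := by
  refine ⟨?_, ?_, ?_⟩
  · intro u g hz c
    refine ⟨(g c)⁻¹, ?_⟩
    have := hz c
    rw [map_inv, this]
    group
  · intro u g u' g' hz hz'
    constructor
    · rintro ⟨v, h, h1, _⟩
      exact ⟨v, fun x y s => ⟨h x y s, by rw [h1 x y s]; group⟩⟩
    · rintro ⟨ζ, hc⟩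
      choose h hh using hc
      refine ⟨ζ, h, fun x y s => by rw [hh x y s]; group, fun c => ?_⟩
      apply hinj
      have e0 := hh c.y c.z c.e0
      have e1 := hh c.x c.z c.e1
      have e2 := hh c.x c.y c.e2
      have ih0 : i (h c.y c.z c.e0) = u' c.y c.z c.e0 * ζ c.y * (u c.y c.z c.e0)⁻¹ * (ζ c.z)⁻¹ := by
        rw [e0]; group
      have ih1 : i (h c.x c.z c.e1) = u' c.x c.z c.e1 * ζ c.x * (u c.x c.z c.e1)⁻¹ * (ζ c.z)⁻¹ := by
        rw [e1]; group
      have ih2 : i (h c.x c.y c.e2) = u' c.x c.y c.e2 * ζ c.x * (u c.x c.y c.e2)⁻¹ * (ζ c.y)⁻¹ := by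
        rw [e2]; group
      have hg := hz c
      have hg' := hz' c
      rw [hg']
      simp only [map_mul, map_inv, hi]
      rw [ih0, ih1, ih2, hg]
      group
  · intro w hw
    choose g hg using hw
    refine ⟨w, fun c => (g c)⁻¹, fun c => ?_, ⟨1, fun x y s => ⟨1, by simp⟩⟩⟩
    rw [map_inv, hg c]
    group
end

section
/- Let ${}^2G = (G \to N)$ be a crossed module with $i$ injective, and let $w$ be a 1-cocycle on a poset $\Delta$ with values in $N/G$. Then there exists a non-abelian 2-cocycle $(u,g) \in \check Z^2(\Delta, {}^2G)$ with $u_b \bmod G = w_b$ for all $b$, which moreover can be chosen to be a twisted connection, i.e., $u_{\bar b} = u_b^{-1}$ for all 1-simplices $b$, where $\bar b$ is the reversed simplex. -/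
/-- The reversed 1-simplex (swapping `∂₀` and `∂₁`, keeping the support). -/
def Seg.rev {Δ : Type*} [PartialOrder Δ] {x y : Δ} (s : Seg Δ x y) : Seg Δ y x :=
  ⟨s.supp, s.hy, s.hx⟩

/-- For a crossed module with `i` injective and a 1-cocycle `w` with values in
`N/G`, there is a non-abelian 2-cocycle `(u, g)` lifting `w` (`u_b ≡ w_b mod G`) which is a
twisted connection: `u_{b̄} = u_b⁻¹` for all 1-simplices `b`. -/
theorem lift_of_modG_cocycle_to_twisted_connection {Δ : Type*} [PartialOrder Δ]
    {G N : Type*} [Group G] [Group N] (i : G →* N) (β : N →* MulAut G)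
    (hi : ∀ (u : N) (g : G), i (β u g) = u * i g * u⁻¹)
    (hb : ∀ g h : G, β (i g) h = g * h * g⁻¹)
    (hinj : Function.Injective i)
    (w : ∀ x y : Δ, Seg Δ x y → N) (hw : IsZ1ModG i w) :
    ∃ (u : ∀ x y : Δ, Seg Δ x y → N) (g : Tri Δ → G),
      IsZ2 i u g ∧
      (∀ (x y : Δ) (s : Seg Δ x y), ∃ g0 : G, u x y s = i g0 * w x y s) ∧
      (∀ (x y : Δ) (s : Seg Δ x y), u y x s.rev = (u x y s)⁻¹) := by
  classical
  -- values of w on degenerate segments lie in the image of i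
  have hdeg : ∀ (x : Δ) (s : Seg Δ x x), ∃ g : G, w x x s = i g := by
    intro x s
    obtain ⟨g, hg⟩ := hw ⟨x, x, x, s, s, s, s.supp, le_refl _, le_refl _, le_refl _⟩
    refine ⟨g⁻¹, ?_⟩
    simp only at hg
    have h1 : (i g * w x x s) * w x x s = 1 * w x x s := by
      rw [one_mul, mul_assoc, ← hg]
    have h2 : i g * w x x s = 1 := mul_right_cancel h1
    rw [map_inv, eq_inv_of_mul_eq_one_left h2, inv_inv]
  -- w of the reversed segment is congruent to the inverse
  have hrev : ∀ (x y : Δ) (s : Seg Δ x y), ∃ k : G,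
      w y x s.rev * w x y s = i k := by
    intro x y s
    obtain ⟨g, hg⟩ := hw ⟨x, y, x, s, s.rev, ⟨s.supp, s.hx, s.hx⟩, s.supp,
      le_refl _, le_refl _, le_refl _⟩
    obtain ⟨h, hh⟩ := hdeg x ⟨s.supp, s.hx, s.hx⟩
    refine ⟨g⁻¹ * h, ?_⟩
    simp only at hg
    rw [hh] at hg
    rw [map_mul, map_inv]
    rw [hg]; group
  -- the chosen well-ordering
  set r : Δ → Δ → Prop := WellOrderingRel with hr
  have htri : ∀ x y : Δ, x ≠ y → ¬ r x y → r y x := by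
    intro x y hxy h
    rcases trichotomous_of r x y with h1 | h1 | h1
    · exact absurd h1 h
    · exact absurd h1 hxy
    · exact h1
  have hasymm : ∀ x y : Δ, r x y → ¬ r y x := fun x y h =>
    (Std.Asymm.asymm x y h)
  -- definition of u
  set u : ∀ x y : Δ, Seg Δ x y → N := fun x y s =>
    if x = y then 1 else if r x y then w x y s else (w y x s.rev)⁻¹ with hu
  -- rev property
  have hurev : ∀ (x y : Δ) (s : Seg Δ x y), u y x s.rev = (u x y s)⁻¹ := by
    intro x y s
    by_cases hxy : x = y
    · subst hxy
      simp [hu]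
    · by_cases hrxy : r x y
      · have : ¬ r y x := hasymm x y hrxy
        simp only [hu, if_neg hxy, if_neg (Ne.symm hxy), if_pos hrxy, if_neg this]
        rfl
      · have hryx : r y x := htri x y hxy hrxy
        simp [hu, if_neg hxy, if_neg (Ne.symm hxy), if_neg hrxy, if_pos hryx]
  -- u ≡ w mod G
  have humod : ∀ (x y : Δ) (s : Seg Δ x y), ∃ g0 : G, u x y s = i g0 * w x y s := by
    intro x y s
    by_cases hxy : x = y
    · subst hxy
      obtain ⟨g, hg⟩ := hdeg x s
      refine ⟨g⁻¹, ?_⟩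
      simp [hu, hg]
    · by_cases hrxy : r x y
      · exact ⟨1, by simp [hu, if_neg hxy, if_pos hrxy]⟩
      · obtain ⟨k, hk⟩ := hrev x y s
        refine ⟨β (w x y s) k⁻¹, ?_⟩
        simp only [hu, if_neg hxy, if_neg hrxy]
        have : w y x s.rev = i k * (w x y s)⁻¹ := by
          rw [← hk]; group
        rw [this, mul_inv_rev, inv_inv, ← map_inv i k, hi]
        group
  -- the 2-cocycle condition holds up to existence
  have hZ2 : ∀ c : Tri Δ, ∃ g : G,
      i g = u c.y c.z c.e0 * u c.x c.y c.e2 * (u c.x c.z c.e1)⁻¹ := by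
    intro c
    obtain ⟨a, ha⟩ := humod c.y c.z c.e0
    obtain ⟨b, hbb⟩ := humod c.x c.y c.e2
    obtain ⟨d, hd⟩ := humod c.x c.z c.e1
    obtain ⟨g, hg⟩ := hw c
    refine ⟨a * β (w c.y c.z c.e0) b * g⁻¹ * d⁻¹, ?_⟩
    rw [ha, hbb, hd, hg]
    simp only [map_mul, map_inv, hi]
    group
  refine ⟨u, fun c => (hZ2 c).choose, fun c => (hZ2 c).choose_spec, humod, hurev⟩
end
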